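/- Let ρ and ρ̃ be probability measures on ℝ^d with finite second moments, with means μ := μ(ρ), μ̃ := μ(ρ̃) and covariance matrices Σ := Cov(ρ), Σ̃ := Cov(ρ̃). Then the squared maximum mean discrepancy induced by the quadratic kernel satisfies ∬ k₂(x,y) dρ(x)dρ(y) − 2∬ k₂(x,y) dρ(x)dρ̃(y) + ∬ k₂(x,y) dρ̃(x)dρ̃(y) = 2‖μ − μ̃‖² + ‖(Σ + μμᵀ) − (Σ̃ + μ̃μ̃ᵀ)‖_F², where ‖·‖_F denotes the Frobenius norm of a matrix. -/

import Mathlib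

open MeasureTheory RealInnerProductSpace

/-- The mean `μ(ρ) = ∫ x dρ(x)` of a measure on `ℝ^d`. -/
noncomputable def meanVec {d : ℕ} (ρ : Measure (EuclideanSpace ℝ (Fin d))) :
    EuclideanSpace ℝ (Fin d) := ∫ x, x ∂ρ

/-- The covariance matrix `Cov(ρ) = ∫ (x-μ)(x-μ)ᵀ dρ(x)` of a measure on `ℝ^d`. -/
noncomputable def covMatrix {d : ℕ} (ρ : Measure (EuclideanSpace ℝ (Fin d))) :
    Matrix (Fin d) (Fin d) ℝ :=
  Matrix.of fun i j => ∫ x, (x i - meanVec ρ i) * (x j - meanVec ρ j) ∂ρ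

/-- The quadratic kernel `k₂(x,y) = (⟨x,y⟩+1)²`. -/
noncomputable def quadKernel {d : ℕ} (x y : EuclideanSpace ℝ (Fin d)) : ℝ := (⟪x, y⟫ + 1) ^ 2

variable {d : ℕ}

lemma normSq_eq (x : EuclideanSpace ℝ (Fin d)) : ‖x‖ ^ 2 = ∑ i, x i ^ 2 := by
  rw [EuclideanSpace.norm_eq, Real.sq_sqrt (by positivity)]
  simp [sq_abs]

lemma coord_sq_le (x : EuclideanSpace ℝ (Fin d)) (i : Fin d) : x i ^ 2 ≤ ‖x‖ ^ 2 := by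
  rw [normSq_eq]
  exact Finset.single_le_sum (fun j _ => sq_nonneg (x j)) (Finset.mem_univ i)

variable {ρ ρ' : Measure (EuclideanSpace ℝ (Fin d))} [IsProbabilityMeasure ρ]
  [IsProbabilityMeasure ρ']

lemma int_coord (hρ : Integrable (fun x => ‖x‖ ^ 2) ρ) (i : Fin d) :
    Integrable (fun x => x i) ρ := by
  refine (hρ.add (integrable_const 1)).mono ?_ ?_
  · exact (EuclideanSpace.proj (𝕜 := ℝ) i).continuous.aestronglyMeasurable
  · filter_upwards with x
    have h := coord_sq_le x i
    simp only [Pi.add_apply, Real.norm_eq_abs]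
    rw [abs_of_nonneg (by positivity : (0:ℝ) ≤ ‖x‖ ^ 2 + 1)]
    nlinarith [abs_nonneg (x i), sq_abs (x i), sq_nonneg (|x i| - 1)]

omit [IsProbabilityMeasure ρ] in
lemma int_prod (hρ : Integrable (fun x => ‖x‖ ^ 2) ρ) (i j : Fin d) :
    Integrable (fun x => x i * x j) ρ := by
  refine hρ.mono ?_ ?_
  · exact ((EuclideanSpace.proj (𝕜 := ℝ) i).continuous.mul
      (EuclideanSpace.proj (𝕜 := ℝ) j).continuous).aestronglyMeasurable
  · filter_upwards with x
    have hi := coord_sq_le x i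
    have hj := coord_sq_le x j
    simp only [Real.norm_eq_abs, abs_mul]
    rw [abs_of_nonneg (sq_nonneg ‖x‖)]
    nlinarith [sq_abs (x i), sq_abs (x j), sq_nonneg (|x i| - |x j|), abs_nonneg (x i), abs_nonneg (x j)]

lemma int_id (hρ : Integrable (fun x => ‖x‖ ^ 2) ρ) :
    Integrable (fun x : EuclideanSpace ℝ (Fin d) => x) ρ := by
  refine (hρ.add (integrable_const 1)).mono aestronglyMeasurable_id ?_
  filter_upwards with x
  simp only [Pi.add_apply, Real.norm_eq_abs]
  rw [abs_of_nonneg (by positivity : (0:ℝ) ≤ ‖x‖ ^ 2 + 1)]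
  nlinarith [norm_nonneg x, sq_nonneg (‖x‖ - 1)]

lemma meanVec_apply (hρ : Integrable (fun x => ‖x‖ ^ 2) ρ) (i : Fin d) :
    meanVec ρ i = ∫ x, x i ∂ρ := by
  have := (EuclideanSpace.proj (𝕜 := ℝ) i).integral_comp_comm (int_id hρ)
  simpa [meanVec] using this.symm

lemma secondMoment_eq (hρ : Integrable (fun x => ‖x‖ ^ 2) ρ) (i j : Fin d) :
    covMatrix ρ i j + meanVec ρ i * meanVec ρ j = ∫ x, x i * x j ∂ρ := by
  have hc : covMatrix ρ i j
      = ∫ x, (x i * x j - (meanVec ρ i * x j + meanVec ρ j * x i)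
          + meanVec ρ i * meanVec ρ j) ∂ρ := by
    rw [covMatrix]
    simp only [Matrix.of_apply]
    congr 1 with x
    ring
  have h1 : Integrable (fun x : EuclideanSpace ℝ (Fin d) =>
      meanVec ρ i * x j + meanVec ρ j * x i) ρ :=
    ((int_coord hρ j).const_mul _).add ((int_coord hρ i).const_mul _)
  have h2 : Integrable (fun x : EuclideanSpace ℝ (Fin d) =>
      x i * x j - (meanVec ρ i * x j + meanVec ρ j * x i)) ρ :=
    (int_prod hρ i j).sub h1
  rw [hc, integral_add h2 (integrable_const _), integral_sub (int_prod hρ i j) h1,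
    integral_add ((int_coord hρ j).const_mul _) ((int_coord hρ i).const_mul _),
    integral_const_mul, integral_const_mul, integral_const]
  simp [meanVec_apply hρ]
  ring

lemma inner_int (hρ' : Integrable (fun x => ‖x‖ ^ 2) ρ') (x : EuclideanSpace ℝ (Fin d)) :
    ∫ y, quadKernel x y ∂ρ'
      = (∑ i, ∑ j, (x i * x j) * ∫ y, y i * y j ∂ρ')
        + (2 * ∑ i, x i * meanVec ρ' i + 1) := by
  have key : ∀ y : EuclideanSpace ℝ (Fin d),
      quadKernel x y = (∑ i, ∑ j, (x i * x j) * (y i * y j))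
        + (2 * ∑ i, x i * y i + 1) := by
    intro y
    have hin : ⟪x, y⟫ = ∑ i, x i * y i := by
      simp [PiLp.inner_apply, RCLike.inner_apply, conj_trivial]
      exact Finset.sum_congr rfl fun i _ => mul_comm _ _
    rw [quadKernel, hin]
    rw [show (∑ i, x i * y i + 1) ^ 2
        = (∑ i, x i * y i) * (∑ j, x j * y j) + (2 * ∑ i, x i * y i + 1) by ring,
      Finset.sum_mul_sum]
    congr 1
    refine Finset.sum_congr rfl fun i _ => Finset.sum_congr rfl fun j _ => by ring
  have hA : Integrable (fun y : EuclideanSpace ℝ (Fin d) =>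
      ∑ i, ∑ j, (x i * x j) * (y i * y j)) ρ' :=
    integrable_finset_sum _ fun i _ => integrable_finset_sum _ fun j _ =>
      (int_prod hρ' i j).const_mul _
  have hB : Integrable (fun y : EuclideanSpace ℝ (Fin d) =>
      2 * ∑ i, x i * y i + 1) ρ' :=
    ((integrable_finset_sum _ fun i _ => (int_coord hρ' i).const_mul _).const_mul 2).add
      (integrable_const 1)
  simp only [key]
  rw [integral_add hA hB, integral_finset_sum _ fun i _ => integrable_finset_sum _
      fun j _ => (int_prod hρ' i j).const_mul _]
  congr 1
  · exact Finset.sum_congr rfl fun i _ => by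
      rw [integral_finset_sum _ fun j _ => (int_prod hρ' i j).const_mul _]
      exact Finset.sum_congr rfl fun j _ => integral_const_mul _ _
  · rw [integral_add ((integrable_finset_sum _ fun i _ =>
        (int_coord hρ' i).const_mul _).const_mul 2) (integrable_const 1),
      integral_const_mul, integral_finset_sum _ fun i _ => (int_coord hρ' i).const_mul _,
      integral_const]
    simp [meanVec_apply hρ', integral_const_mul]

lemma double_int (hρ : Integrable (fun x => ‖x‖ ^ 2) ρ)
    (hρ' : Integrable (fun x => ‖x‖ ^ 2) ρ') :
    ∫ x, ∫ y, quadKernel x y ∂ρ' ∂ρ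
      = (∑ i, ∑ j, (∫ x, x i * x j ∂ρ) * ∫ y, y i * y j ∂ρ')
        + (2 * ∑ i, meanVec ρ i * meanVec ρ' i + 1) := by
  simp only [inner_int hρ']
  have hA : Integrable (fun x : EuclideanSpace ℝ (Fin d) =>
      ∑ i, ∑ j, (x i * x j) * ∫ y, y i * y j ∂ρ') ρ :=
    integrable_finset_sum _ fun i _ => integrable_finset_sum _ fun j _ =>
      (int_prod hρ i j).mul_const _
  have hB : Integrable (fun x : EuclideanSpace ℝ (Fin d) =>
      2 * ∑ i, x i * meanVec ρ' i + 1) ρ :=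
    ((integrable_finset_sum _ fun i _ => (int_coord hρ i).mul_const _).const_mul 2).add
      (integrable_const 1)
  rw [integral_add hA hB, integral_finset_sum _ fun i _ => integrable_finset_sum _
      fun j _ => (int_prod hρ i j).mul_const _]
  congr 1
  · exact Finset.sum_congr rfl fun i _ => by
      rw [integral_finset_sum _ fun j _ => (int_prod hρ i j).mul_const _]
      exact Finset.sum_congr rfl fun j _ => integral_mul_const _ _
  · rw [integral_add ((integrable_finset_sum _ fun i _ =>
        (int_coord hρ i).mul_const _).const_mul 2) (integrable_const 1),
      integral_const_mul, integral_finset_sum _ fun i _ => (int_coord hρ i).mul_const _,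
      integral_const]
    simp [meanVec_apply hρ, integral_mul_const]

lemma sum2_sub_sq (a b : Fin d → Fin d → ℝ) :
    ∑ i, ∑ j, (a i j - b i j) ^ 2
      = (∑ i, ∑ j, a i j * a i j) - 2 * (∑ i, ∑ j, a i j * b i j)
        + ∑ i, ∑ j, b i j * b i j := by
  have h : ∀ i j, (a i j - b i j) ^ 2
      = a i j * a i j - 2 * (a i j * b i j) + b i j * b i j := fun i j => by ring
  simp_rw [h, Finset.sum_add_distrib, Finset.sum_sub_distrib, ← Finset.mul_sum]

lemma sum1_sub_sq (u v : Fin d → ℝ) :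
    ∑ i, (u i - v i) ^ 2
      = (∑ i, u i * u i) - 2 * (∑ i, u i * v i) + ∑ i, v i * v i := by
  have h : ∀ i, (u i - v i) ^ 2
      = u i * u i - 2 * (u i * v i) + v i * v i := fun i => by ring
  simp_rw [h, Finset.sum_add_distrib, Finset.sum_sub_distrib, ← Finset.mul_sum]

/-- The squared MMD induced by the quadratic kernel equals
`2‖μ-μ̃‖² + ‖(Σ + μμᵀ) - (Σ̃ + μ̃μ̃ᵀ)‖_F²`. -/
theorem stmt9 {d : ℕ} (ρ ρ' : Measure (EuclideanSpace ℝ (Fin d)))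
    [IsProbabilityMeasure ρ] [IsProbabilityMeasure ρ']
    (hρ : Integrable (fun x => ‖x‖ ^ 2) ρ) (hρ' : Integrable (fun x => ‖x‖ ^ 2) ρ') :
    (∫ x, ∫ y, quadKernel x y ∂ρ ∂ρ)
      - 2 * (∫ x, ∫ y, quadKernel x y ∂ρ' ∂ρ)
      + (∫ x, ∫ y, quadKernel x y ∂ρ' ∂ρ')
    = 2 * ‖meanVec ρ - meanVec ρ'‖ ^ 2
      + ∑ i, ∑ j,
          ((covMatrix ρ i j + meanVec ρ i * meanVec ρ j)
            - (covMatrix ρ' i j + meanVec ρ' i * meanVec ρ' j)) ^ 2 := by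
  simp only [secondMoment_eq hρ, secondMoment_eq hρ']
  rw [double_int hρ hρ, double_int hρ hρ', double_int hρ' hρ',
    sum2_sub_sq (fun i j => ∫ x, x i * x j ∂ρ) (fun i j => ∫ x, x i * x j ∂ρ'),
    normSq_eq]
  simp_rw [PiLp.sub_apply]
  rw [sum1_sub_sq (fun i => meanVec ρ i) (fun i => meanVec ρ' i)]
  ring
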